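/- Let N = 2^J, let x ∈ ℝ^N have nonnegative entries, and let x̂ = F_N x. Fix j with 0 ≤ j ≤ J-1, an index μ with 0 ≤ μ < 2^j, and L with 0 ≤ L ≤ j, and assume the support of x^(j) is contained in { (μ + r) mod 2^j : 0 ≤ r < 2^L }. Define x̃^(j) = ( x_{(μ+r) mod 2^j}^(j) )_{r=0}^{2^L-1}, x̃_0^(j+1) = ( x_{(μ+r) mod 2^j}^(j+1) )_{r=0}^{2^L-1}, and y = ( x̂_{2^{J-L} p + 2^{J-j-1}} )_{p=0}^{2^L-1}. Then x̃_0^(j+1) = (1/2) diag( ω_{2^{j+1}}^{ -((μ+r) mod 2^j) } )_{r=0}^{2^L-1} · F_{2^L}^{-1} · diag( ω_{2^L}^{ -μ p } )_{p=0}^{2^L-1} · y + (1/2) x̃^(j). Moreover ( x_{2^j + ((μ+r) mod 2^j)}^(j+1) )_{r=0}^{2^L-1} = x̃^(j) − x̃_0^(j+1). -/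

import Mathlib

open Complex Finset

/-- `ω_M = e^{-2πi/M}`. -/
noncomputable def dftOmega (M : ℕ) : ℂ := Complex.exp (-2 * Real.pi * Complex.I / M)

/-- Discrete Fourier transform of length `M`: `(F_M v)_k = Σ_{r<M} ω_M^{k r} v_r`. -/
noncomputable def dft (M : ℕ) (v : ℕ → ℂ) (k : ℕ) : ℂ :=
  ∑ r ∈ Finset.range M, dftOmega M ^ (k * r) * v r

/-- The `2^j`-periodization of a vector `x ∈ ℝ^{2^J}`:
`x^(j)_k = Σ_{ℓ < 2^{J-j}} x_{k + 2^j ℓ}`. -/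
noncomputable def periodization (J j : ℕ) (x : ℕ → ℝ) (k : ℕ) : ℝ :=
  ∑ ℓ ∈ Finset.range (2 ^ (J - j)), x (k + 2 ^ j * ℓ)
/-- The Fourier matrix `F_M = (ω_M^{pq})_{p,q=0}^{M-1}`. -/
noncomputable def fourierMatrix (M : ℕ) : Matrix (Fin M) (Fin M) ℂ :=
  fun p q => dftOmega M ^ ((p : ℕ) * (q : ℕ))

/-! ### Auxiliary lemmas -/

lemma dftOmega_ne_zero (M : ℕ) : dftOmega M ≠ 0 := Complex.exp_ne_zero _

lemma dftOmega_pow_self (M : ℕ) (hM : M ≠ 0) : dftOmega M ^ M = 1 := by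
  rw [dftOmega, ← Complex.exp_nat_mul]
  have hM' : (M:ℂ) ≠ 0 := Nat.cast_ne_zero.mpr hM
  have h : (M:ℂ) * (-2 * Real.pi * Complex.I / M) = ((-1 : ℤ) : ℂ) * (2 * Real.pi * Complex.I) := by
    field_simp; ring
  rw [h, Complex.exp_int_mul_two_pi_mul_I]

lemma dftOmega_pow_mod (M : ℕ) (hM : M ≠ 0) (a : ℕ) :
    dftOmega M ^ a = dftOmega M ^ (a % M) := by
  conv_lhs => rw [← Nat.mod_add_div a M]
  rw [pow_add, pow_mul, dftOmega_pow_self M hM, one_pow, mul_one]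

lemma dftOmega_pow_eq_of_modEq (M : ℕ) (hM : M ≠ 0) {a b : ℕ} (h : a ≡ b [MOD M]) :
    dftOmega M ^ a = dftOmega M ^ b := by
  rw [dftOmega_pow_mod M hM a, dftOmega_pow_mod M hM b, h]

lemma dftOmega_pow_dvd (M : ℕ) (hM : M ≠ 0) {a : ℕ} (h : M ∣ a) : dftOmega M ^ a = 1 := by
  obtain ⟨t, rfl⟩ := h
  rw [dftOmega_pow_mod M hM, Nat.mul_mod_right, pow_zero]

lemma dftOmega_mul_pow (c M : ℕ) (hc : c ≠ 0) (hM : M ≠ 0) :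
    dftOmega (c * M) ^ c = dftOmega M := by
  rw [dftOmega, dftOmega, ← Complex.exp_nat_mul]
  congr 1
  show (c:ℂ) * (-2 * ↑Real.pi * Complex.I / ((c*M : ℕ):ℂ)) = -2 * ↑Real.pi * Complex.I / (M:ℂ)
  have hc' : (c:ℂ) ≠ 0 := Nat.cast_ne_zero.mpr hc
  have hM' : (M:ℂ) ≠ 0 := Nat.cast_ne_zero.mpr hM
  have hcM : ((c * M : ℕ) : ℂ) = (c:ℂ) * (M:ℂ) := by push_cast; ring
  rw [hcM, mul_div_assoc', mul_div_mul_left _ _ hc']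

lemma dftOmega_eq_inv (M : ℕ) : dftOmega M = (Complex.exp (2 * Real.pi * Complex.I / M))⁻¹ := by
  rw [dftOmega, ← Complex.exp_neg]; congr 1; ring

lemma isPrimitiveRoot_dftOmega (M : ℕ) (hM : M ≠ 0) : IsPrimitiveRoot (dftOmega M) M := by
  rw [dftOmega_eq_inv]; exact (Complex.isPrimitiveRoot_exp M hM).inv

lemma dftOmega_two : dftOmega 2 = -1 := by
  rw [dftOmega]
  have : (-2 * (Real.pi:ℂ) * Complex.I / (2:ℕ)) = -(Real.pi * Complex.I) := by
    push_cast; ring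
  rw [this, Complex.exp_neg, Complex.exp_pi_mul_I]
  norm_num

lemma dftOmega_pow_pow (a b c t : ℕ) (h : c + b = a) :
    dftOmega (2^a) ^ (2^c * t) = dftOmega (2^b) ^ t := by
  have h1 : (2:ℕ)^a = 2^c * 2^b := by rw [← pow_add, h]
  rw [pow_mul, h1, dftOmega_mul_pow _ _ (pow_ne_zero _ two_ne_zero) (pow_ne_zero _ two_ne_zero)]

noncomputable def fourierInv (M : ℕ) : Matrix (Fin M) (Fin M) ℂ :=
  fun p q => (M:ℂ)⁻¹ * (dftOmega M ^ ((p:ℕ) * (q:ℕ)))⁻¹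

lemma fourierInv_mul (M : ℕ) (hM : M ≠ 0) : fourierInv M * fourierMatrix M = 1 := by
  ext p q
  rw [Matrix.mul_apply]
  simp only [fourierInv, fourierMatrix, Matrix.one_apply]
  have hprim := isPrimitiveRoot_dftOmega M hM
  set ω := dftOmega M with hωdef
  set z : ℂ := ω ^ (q:ℕ) * (ω ^ (p:ℕ))⁻¹ with hz
  have key : ∀ r : Fin M, (M:ℂ)⁻¹ * (ω ^ ((p:ℕ) * (r:ℕ)))⁻¹ * ω ^ ((r:ℕ) * (q:ℕ))
      = (M:ℂ)⁻¹ * z ^ (r:ℕ) := by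
    intro r
    have e1 : ω ^ ((p:ℕ)*(r:ℕ)) = (ω ^ (p:ℕ))^(r:ℕ) := by rw [pow_mul]
    have e2 : ω ^ ((r:ℕ)*(q:ℕ)) = (ω ^ (q:ℕ))^(r:ℕ) := by rw [mul_comm, pow_mul]
    rw [e1, e2, hz, mul_pow, inv_pow]
    ring
  rw [Finset.sum_congr rfl (fun r _ => key r), ← Finset.mul_sum,
    Fin.sum_univ_eq_sum_range (fun r => z ^ r)]
  have hωM : ω ^ M = 1 := dftOmega_pow_self M hM
  have hzM : z ^ M = 1 := by
    rw [hz, mul_pow, ← pow_mul, mul_comm (q:ℕ) M, pow_mul, hωM, one_pow, inv_pow,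
      ← pow_mul, mul_comm (p:ℕ) M, pow_mul, hωM, one_pow, inv_one, mul_one]
  by_cases hpq : p = q
  · subst hpq
    have : z = 1 := by rw [hz, mul_inv_cancel₀ (pow_ne_zero _ (dftOmega_ne_zero M))]
    simp [this, Nat.cast_ne_zero.mpr hM]
  · have hz1 : z ≠ 1 := by
      intro h
      apply hpq
      have h2 : ω ^ (p:ℕ) = ω ^ (q:ℕ) := by
        have := congrArg (· * ω ^ (p:ℕ)) h
        simp only [hz, one_mul, mul_assoc] at this
        rw [inv_mul_cancel₀ (pow_ne_zero (p:ℕ) (dftOmega_ne_zero M : ω ≠ 0)), mul_one] at this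
        exact this.symm
      exact Fin.ext (hprim.pow_inj p.isLt q.isLt h2)
    rw [geom_sum_eq hz1, hzM]
    simp [Matrix.one_apply, hpq]

lemma fourierMatrix_inv_mulVec (M : ℕ) (hM : M ≠ 0) (z : Fin M → ℂ) :
    (fourierMatrix M)⁻¹.mulVec ((fourierMatrix M).mulVec z) = z := by
  rw [Matrix.inv_eq_left_inv (fourierInv_mul M hM), Matrix.mulVec_mulVec,
    fourierInv_mul M hM, Matrix.one_mulVec]

lemma sum_range_mul' {β : Type*} [AddCommMonoid β] (f : ℕ → β) (M K : ℕ) :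
    ∑ n ∈ Finset.range (M * K), f n = ∑ m ∈ Finset.range M, ∑ ℓ ∈ Finset.range K, f (m + M * ℓ) := by
  induction K with
  | zero => simp
  | succ K ih =>
    have hsplit : ∑ n ∈ Finset.range (M * (K+1)), f n
        = ∑ n ∈ Finset.range (M * K), f n + ∑ m ∈ Finset.range M, f (M * K + m) := by
      rw [Finset.range_eq_Ico, ← Finset.sum_Ico_consecutive f (Nat.zero_le (M*K))
        (Nat.mul_le_mul le_rfl (Nat.le_succ K)), Finset.sum_Ico_eq_sum_range]
      rw [Finset.sum_Ico_eq_sum_range]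
      have hMM : M * (K + 1) - M * K = M := by rw [Nat.mul_succ, Nat.add_sub_cancel_left]
      simp [hMM]
    rw [hsplit, ih, ← Finset.sum_add_distrib]
    refine Finset.sum_congr rfl fun m _ => ?_
    rw [Finset.sum_range_succ]
    congr 2
    omega

lemma periodization_nonneg (J j : ℕ) (x : ℕ → ℝ) (hx : ∀ k, 0 ≤ x k) (k : ℕ) :
    0 ≤ periodization J j x k := Finset.sum_nonneg fun _ _ => hx _

lemma periodization_split (J j : ℕ) (hj : j + 1 ≤ J) (x : ℕ → ℝ) (k : ℕ) :
    periodization J j x k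
      = periodization J (j+1) x k + periodization J (j+1) x (k + 2^j) := by
  unfold periodization
  have h2 : 2 ^ (J - j) = 2 * 2 ^ (J - (j+1)) := by
    rw [← pow_succ']
    congr 1
    omega
  rw [h2, sum_range_mul' (fun ℓ => x (k + 2 ^ j * ℓ)) 2 (2 ^ (J - (j+1))),
    Finset.sum_range_succ, Finset.sum_range_succ, Finset.sum_range_zero, zero_add]
  congr 1
  · apply Finset.sum_congr rfl; intro ℓ _; congr 1; ring
  · apply Finset.sum_congr rfl; intro ℓ _; congr 1; rw [pow_succ]; ring

/-- under the short-support assumption on `x^(j)`, with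
`y_p = x̂_{2^{J-L}p + 2^{J-j-1}}`, one has
`x̃_0^(j+1) = (1/2) diag(ω_{2^{j+1}}^{-((μ+r) mod 2^j)}) F_{2^L}^{-1}
diag(ω_{2^L}^{-μp}) y + (1/2) x̃^(j)`, and
`x̃_1^(j+1) = x̃^(j) − x̃_0^(j+1)`. -/
theorem restricted_recovery (J : ℕ) (x : ℕ → ℝ) (hx : ∀ k, 0 ≤ x k)
    (j : ℕ) (hj : j + 1 ≤ J) (μ : ℕ) (hμ : μ < 2 ^ j) (L : ℕ) (hL : L ≤ j)
    (hsupp : ∀ k < 2 ^ j, periodization J j x k ≠ 0 →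
      ∃ r < 2 ^ L, k = (μ + r) % 2 ^ j)
    (y : Fin (2 ^ L) → ℂ)
    (hy : ∀ p : Fin (2 ^ L),
      y p = dft (2 ^ J) (fun n => (x n : ℂ)) (2 ^ (J - L) * (p : ℕ) + 2 ^ (J - j - 1))) :
    (∀ r : Fin (2 ^ L),
      (periodization J (j + 1) x ((μ + (r : ℕ)) % 2 ^ j) : ℂ)
        = (1 / 2) * (dftOmega (2 ^ (j + 1)) ^ ((μ + (r : ℕ)) % 2 ^ j))⁻¹ *
            ((fourierMatrix (2 ^ L))⁻¹.mulVec
              (fun p : Fin (2 ^ L) => (dftOmega (2 ^ L) ^ (μ * (p : ℕ)))⁻¹ * y p) r)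
          + (1 / 2) * (periodization J j x ((μ + (r : ℕ)) % 2 ^ j) : ℂ)) ∧
    (∀ r : Fin (2 ^ L),
      periodization J (j + 1) x (2 ^ j + (μ + (r : ℕ)) % 2 ^ j)
        = periodization J j x ((μ + (r : ℕ)) % 2 ^ j)
          - periodization J (j + 1) x ((μ + (r : ℕ)) % 2 ^ j)) := by
  have h2jpos : 0 < 2^j := pow_pos (by norm_num) j
  set d : ℕ → ℝ :=
    fun k => periodization J (j+1) x k - periodization J (j+1) x (k + 2^j) with hd
  have hsplit' : ∀ k, periodization J j x k
      = periodization J (j+1) x k + periodization J (j+1) x (k + 2^j) :=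
    fun k => periodization_split J j hj x k
  have hd0 : ∀ k, k < 2^j → (∀ r, r < 2^L → k ≠ (μ + r) % 2^j) → d k = 0 := by
    intro k hk hnot
    by_cases hz : periodization J j x k = 0
    · have h1 := periodization_nonneg J (j+1) x hx k
      have h2 := periodization_nonneg J (j+1) x hx (k + 2^j)
      have h3 := hsplit' k
      simp only [hd]
      linarith
    · obtain ⟨r, hr, hkr⟩ := hsupp k hk hz
      exact absurd hkr (hnot r hr)
  -- key formula for y
  have hkey : ∀ p : Fin (2^L), y p = ∑ r ∈ Finset.range (2^L),
      dftOmega (2^L) ^ ((p:ℕ) * (μ + r)) *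
        (dftOmega (2^(j+1)) ^ ((μ + r) % 2^j) * ((d ((μ + r) % 2^j) : ℝ) : ℂ)) := by
    intro p
    set k0 : ℕ := 2 ^ (J - L) * (p:ℕ) + 2 ^ (J - j - 1) with hk0
    have hdvd : 2^J ∣ k0 * 2^(j+1) := by
      have e1 : (2:ℕ)^(J-L) * 2^(j+1) = 2^(J-L+(j+1)) := (pow_add 2 (J-L) (j+1)).symm
      have e2 : (2:ℕ)^(J-j-1) * 2^(j+1) = 2^J := by rw [← pow_add]; congr 1; omega
      have e : k0 * 2^(j+1) = 2^(J-L+(j+1)) * (p:ℕ) + 2^J := by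
        rw [hk0, ← e1, ← e2]; ring
      rw [e]
      exact dvd_add (Dvd.dvd.mul_right (pow_dvd_pow 2 (by omega)) _) dvd_rfl
    have hstepA : dft (2^J) (fun n => (x n : ℂ)) k0
        = ∑ m ∈ Finset.range (2^(j+1)),
            dftOmega (2^J) ^ (k0 * m) * ((periodization J (j+1) x m : ℝ) : ℂ) := by
      rw [dft, show Finset.range (2^J) = Finset.range (2^(j+1) * 2^(J-(j+1))) from by
          rw [← pow_add, Nat.add_sub_cancel' hj],
        sum_range_mul' (fun n => dftOmega (2^J) ^ (k0 * n) * (x n : ℂ)) (2^(j+1)) (2^(J-(j+1)))]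
      refine Finset.sum_congr rfl fun m _ => ?_
      simp only [periodization]
      push_cast
      rw [Finset.mul_sum]
      refine Finset.sum_congr rfl fun ℓ _ => ?_
      have e : k0 * (m + 2^(j+1) * ℓ) = k0 * m + (k0 * 2^(j+1)) * ℓ := by ring
      have h1 : dftOmega (2^J) ^ (k0 * 2^(j+1) * ℓ) = 1 :=
        dftOmega_pow_dvd _ (pow_ne_zero _ two_ne_zero) (Dvd.dvd.mul_right hdvd ℓ)
      rw [e, pow_add, h1, mul_one]
    have hminus : dftOmega (2^J) ^ (k0 * 2^j) = -1 := by
      have e2 : (2:ℕ)^(J-j-1) * 2^j = 2^(J-1) := by rw [← pow_add]; congr 1; omega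
      have e1 : (2:ℕ)^(J-L) * 2^j = 2^(J-L+j) := (pow_add 2 (J-L) j).symm
      have e : k0 * 2^j = 2^(J-L+j) * (p:ℕ) + 2^(J-1) := by rw [hk0, ← e1, ← e2]; ring
      rw [e, pow_add, dftOmega_pow_dvd _ (pow_ne_zero _ two_ne_zero)
        (Dvd.dvd.mul_right (pow_dvd_pow 2 (by omega)) _), one_mul]
      have hJ2 : (2:ℕ)^J = 2^(J-1) * 2 := by rw [← pow_succ]; congr 1; omega
      calc dftOmega (2^J) ^ 2^(J-1) = dftOmega (2^(J-1) * 2) ^ 2^(J-1) := by rw [← hJ2]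
        _ = dftOmega 2 := dftOmega_mul_pow _ _ (pow_ne_zero _ two_ne_zero) two_ne_zero
        _ = -1 := dftOmega_two
    have hstepB : dft (2^J) (fun n => (x n : ℂ)) k0
        = ∑ m ∈ Finset.range (2^j), dftOmega (2^J) ^ (k0 * m) * ((d m : ℝ) : ℂ) := by
      rw [hstepA, show (2:ℕ)^(j+1) = 2^j * 2 by rw [pow_succ],
        sum_range_mul' (fun m => dftOmega (2^J) ^ (k0 * m)
          * ((periodization J (j+1) x m : ℝ) : ℂ)) (2^j) 2]
      refine Finset.sum_congr rfl fun m _ => ?_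
      rw [Finset.sum_range_succ, Finset.sum_range_one]
      have e0 : m + 2^j * 0 = m := by ring
      have e1 : m + 2^j * 1 = m + 2^j := by ring
      rw [e0, e1]
      have e2 : k0 * (m + 2^j) = k0 * m + k0 * 2^j := by ring
      rw [e2, pow_add, hminus]
      simp only [hd]
      push_cast
      ring
    rw [hy p, ← hk0, hstepB]
    have himage : Finset.image (fun r => (μ + r) % 2^j) (Finset.range (2^L))
        ⊆ Finset.range (2^j) := by
      intro m hm
      simp only [Finset.mem_image, Finset.mem_range] at hm ⊢
      obtain ⟨r, _, rfl⟩ := hm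
      exact Nat.mod_lt _ h2jpos
    have hvanish : ∀ m ∈ Finset.range (2^j),
        m ∉ Finset.image (fun r => (μ + r) % 2^j) (Finset.range (2^L)) →
        dftOmega (2^J) ^ (k0 * m) * ((d m : ℝ) : ℂ) = 0 := by
      intro m hm hnm
      simp only [Finset.mem_image, Finset.mem_range, not_exists, not_and] at hnm
      simp only [Finset.mem_range] at hm
      have : d m = 0 := hd0 m hm (fun r hr he => hnm r hr he.symm)
      rw [this]
      simp
    have hinj : ∀ r ∈ Finset.range (2^L), ∀ s ∈ Finset.range (2^L),
        (μ + r) % 2^j = (μ + s) % 2^j → r = s := by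
      intro r hr s hs h
      simp only [Finset.mem_range] at hr hs
      have h2L : (2:ℕ)^L ≤ 2^j := Nat.pow_le_pow_right (by norm_num) hL
      have hmc : r ≡ s [MOD 2^j] := Nat.ModEq.add_left_cancel' μ h
      have := hmc
      unfold Nat.ModEq at this
      rwa [Nat.mod_eq_of_lt (lt_of_lt_of_le hr h2L),
        Nat.mod_eq_of_lt (lt_of_lt_of_le hs h2L)] at this
    rw [← Finset.sum_subset himage hvanish, Finset.sum_image hinj]
    refine Finset.sum_congr rfl fun r hr => ?_
    have eD : dftOmega (2^J) ^ (k0 * ((μ + r) % 2^j))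
        = dftOmega (2^L) ^ ((p:ℕ) * (μ + r)) * dftOmega (2^(j+1)) ^ ((μ + r) % 2^j) := by
      have e : k0 * ((μ + r) % 2^j)
          = 2^(J-L) * ((p:ℕ) * ((μ + r) % 2^j)) + 2^(J-j-1) * ((μ + r) % 2^j) := by
        rw [hk0]; ring
      rw [e, pow_add, dftOmega_pow_pow J L (J-L) _ (by omega),
        dftOmega_pow_pow J (j+1) (J-j-1) _ (by omega)]
      congr 1
      apply dftOmega_pow_eq_of_modEq _ (pow_ne_zero _ two_ne_zero)
      exact Nat.ModEq.mul_left (p:ℕ)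
        (Nat.ModEq.of_dvd (pow_dvd_pow 2 hL) (Nat.mod_modEq (μ+r) (2^j)))
    rw [eD, mul_assoc]
  -- invert the Fourier matrix
  have hFz : (fourierMatrix (2^L)).mulVec
      (fun r : Fin (2^L) => dftOmega (2^(j+1)) ^ ((μ + (r:ℕ)) % 2^j)
        * ((d ((μ + (r:ℕ)) % 2^j) : ℝ) : ℂ))
      = (fun p : Fin (2 ^ L) => (dftOmega (2 ^ L) ^ (μ * (p : ℕ)))⁻¹ * y p) := by
    funext p
    rw [hkey p, Finset.mul_sum]
    simp only [Matrix.mulVec, dotProduct, fourierMatrix]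
    rw [Fin.sum_univ_eq_sum_range (fun r => dftOmega (2^L) ^ ((p:ℕ) * r)
      * (dftOmega (2^(j+1)) ^ ((μ + r) % 2^j) * ((d ((μ + r) % 2^j) : ℝ) : ℂ)))]
    refine Finset.sum_congr rfl fun r hr => ?_
    have e : (p:ℕ) * (μ + r) = μ * (p:ℕ) + (p:ℕ) * r := by ring
    rw [e]
    have e2 : dftOmega (2^L) ^ (μ * (p:ℕ) + (p:ℕ) * r)
        = dftOmega (2^L) ^ (μ * (p:ℕ)) * dftOmega (2^L) ^ ((p:ℕ) * r) := pow_add _ _ _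
    rw [e2, mul_assoc (dftOmega (2^L) ^ (μ * (p:ℕ))), inv_mul_cancel_left₀ (pow_ne_zero _ (dftOmega_ne_zero _))]
  have hinv : ∀ r : Fin (2^L),
      (fourierMatrix (2 ^ L))⁻¹.mulVec
        (fun p : Fin (2 ^ L) => (dftOmega (2 ^ L) ^ (μ * (p : ℕ)))⁻¹ * y p) r
      = dftOmega (2^(j+1)) ^ ((μ + (r:ℕ)) % 2^j)
          * ((d ((μ + (r:ℕ)) % 2^j) : ℝ) : ℂ) := by
    intro r
    rw [← hFz, fourierMatrix_inv_mulVec _ (pow_ne_zero _ two_ne_zero)]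
  constructor
  · intro r
    rw [hinv r]
    have hs := hsplit' ((μ + (r:ℕ)) % 2^j)
    have hw : dftOmega (2^(j+1)) ^ ((μ + (r:ℕ)) % 2^j) ≠ 0 :=
      pow_ne_zero _ (dftOmega_ne_zero _)
    rw [hs]
    simp only [hd]
    push_cast
    field_simp
    ring
  · intro r
    have hs := hsplit' ((μ + (r:ℕ)) % 2^j)
    rw [show 2^j + (μ + (r:ℕ)) % 2^j = (μ + (r:ℕ)) % 2^j + 2^j from Nat.add_comm _ _]
    linarith
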